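/- Let H be a Hilbert space, (g_i) a frame for H with analysis operator U : H → ℓ². If the orthogonal complement of the range of U in ℓ² is finite-dimensional, then every sequence (f_i) in H satisfying f = Σᵢ ⟨f, gᵢ⟩ fᵢ for all f ∈ H is itself a frame for H (hence a dual frame of (g_i)). -/

import Mathlib

open scoped RealInnerProductSpace

open Filter Finset in
set_option maxHeartbeats 1000000 in
set_option synthInstance.maxHeartbeats 400000 in
theorem stmt_13 (H : Type*) [NormedAddCommGroup H] [InnerProductSpace ℝ H] [CompleteSpace H]
    (g : ℕ → H)
    (hframe : ∃ A B : ℝ, 0 < A ∧ 0 < B ∧ ∀ f : H,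
      Summable (fun i => ⟪f, g i⟫ ^ 2) ∧
      A * ‖f‖ ^ 2 ≤ ∑' i, ⟪f, g i⟫ ^ 2 ∧ ∑' i, ⟪f, g i⟫ ^ 2 ≤ B * ‖f‖ ^ 2)
    (U : H →L[ℝ] lp (fun _ : ℕ => ℝ) 2) (hU : ∀ (f : H) (i : ℕ), U f i = ⟪f, g i⟫)
    (hfin : FiniteDimensional ℝ ((LinearMap.range (U : H →ₗ[ℝ] lp (fun _ : ℕ => ℝ) 2))ᗮ)) :
    ∀ F : ℕ → H,
      (∀ f : H, Filter.Tendsto (fun n => ∑ i ∈ Finset.range n, ⟪f, g i⟫ • F i)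
        Filter.atTop (nhds f)) →
      ∃ A B : ℝ, 0 < A ∧ 0 < B ∧ ∀ f : H,
        Summable (fun i => ⟪f, F i⟫ ^ 2) ∧
        A * ‖f‖ ^ 2 ≤ ∑' i, ⟪f, F i⟫ ^ 2 ∧ ∑' i, ⟪f, F i⟫ ^ 2 ≤ B * ‖f‖ ^ 2 := by
  intro F hF
  obtain ⟨A₀, B₀, hA₀, hB₀, hg⟩ := hframe
  -- norm of U h
  have hUnorm : ∀ h : H, ‖U h‖ ^ 2 = ∑' i, ⟪h, g i⟫ ^ 2 := by
    intro h
    rw [← real_inner_self_eq_norm_sq, lp.inner_eq_tsum]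
    congr 1; funext i
    simp [RCLike.inner_apply, starRingEnd_apply, star_trivial, hU, sq]
  have hUlow : ∀ h : H, Real.sqrt A₀ * ‖h‖ ≤ ‖U h‖ := by
    intro h
    have h1 : A₀ * ‖h‖ ^ 2 ≤ ‖U h‖ ^ 2 := by rw [hUnorm]; exact (hg h).2.1
    have := Real.sqrt_le_sqrt h1
    rwa [Real.sqrt_mul hA₀.le, Real.sqrt_sq (norm_nonneg _), Real.sqrt_sq (norm_nonneg _)] at this
  -- the partial sum operators
  set S : ℕ → H →L[ℝ] H := fun n => ∑ i ∈ range n, ((innerSL ℝ (g i)).smulRight (F i)) with hS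
  have hSapp : ∀ n f, S n f = ∑ i ∈ range n, ⟪f, g i⟫ • F i := by
    intro n f
    simp [hS, ContinuousLinearMap.sum_apply, real_inner_comm]
  obtain ⟨C, hC0, hCS⟩ : ∃ C, 0 < C ∧ ∀ n, ‖S n‖ ≤ C := by
    have hpt : ∀ f : H, ∃ C, ∀ n, ‖S n f‖ ≤ C := by
      intro f
      have : Tendsto (fun n => ‖S n f‖) atTop (nhds ‖f‖) := by
        simpa [hSapp] using (hF f).norm
      obtain ⟨C, hC⟩ := this.bddAbove_range
      exact ⟨C, fun n => hC ⟨n, rfl⟩⟩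
    obtain ⟨C', hC'⟩ := banach_steinhaus hpt
    exact ⟨max C' 1, lt_of_lt_of_le one_pos (le_max_right _ _),
      fun n => (hC' n).trans (le_max_left _ _)⟩
  -- antilipschitz and closed range
  have hanti : AntilipschitzWith ⟨(Real.sqrt A₀)⁻¹, by positivity⟩ U := by
    refine U.antilipschitz_of_bound fun h => ?_
    have hs : 0 < Real.sqrt A₀ := Real.sqrt_pos.2 hA₀
    have h1 := hUlow h
    show ‖h‖ ≤ (Real.sqrt A₀)⁻¹ * ‖U h‖
    calc ‖h‖ = (Real.sqrt A₀)⁻¹ * (Real.sqrt A₀ * ‖h‖) := by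
          field_simp
      _ ≤ (Real.sqrt A₀)⁻¹ * ‖U h‖ := mul_le_mul_of_nonneg_left h1 (by positivity)
  set R := LinearMap.range (U : H →ₗ[ℝ] lp (fun _ : ℕ => ℝ) 2) with hRdef
  haveI : CompleteSpace R := hanti.completeSpace_range_clm
  -- summability of the F-coefficients
  have hsum : ∀ f : H, Summable fun i => ⟪f, F i⟫ ^ 2 := by
    intro f
    by_contra hns
    set K := C * ‖f‖ / Real.sqrt A₀ with hKdef
    have hs0 : 0 < Real.sqrt A₀ := Real.sqrt_pos.2 hA₀
    have hK0 : 0 ≤ K := by positivity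
    set c : ℕ → lp (fun _ : ℕ => ℝ) 2 :=
      fun n => ∑ i ∈ range n, lp.single 2 i (⟪f, F i⟫ : ℝ) with hcdef
    have hcapp : ∀ n j, c n j = if j < n then ⟪f, F j⟫ else 0 := by
      intro n j
      have h1 : c n j = ∑ i ∈ range n, (lp.single 2 i (⟪f, F i⟫ : ℝ) : ∀ _ : ℕ, ℝ) j := by
        rw [hcdef]; rw [lp.coeFn_sum]; simp
      rw [h1]
      by_cases hj : j < n
      · rw [if_pos hj]
        have h2 : ∀ b ∈ range n, b ≠ j → (lp.single 2 b (⟪f, F b⟫ : ℝ) : ∀ _ : ℕ, ℝ) j = 0 :=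
          fun b _ hbj => lp.single_apply_ne 2 b _ (Ne.symm hbj)
        rw [Finset.sum_eq_single_of_mem j (mem_range.2 hj) h2]
        exact lp.single_apply_self 2 j _
      · rw [if_neg hj]
        refine Finset.sum_eq_zero fun i hi => ?_
        have hij : j ≠ i := by
          intro h; exact hj (h ▸ mem_range.1 hi)
        exact lp.single_apply_ne 2 i _ hij
    have hcnorm : ∀ n, ‖c n‖ ^ 2 = ∑ i ∈ range n, ⟪f, F i⟫ ^ 2 := by
      intro n
      have h1 : ‖c n‖ ^ 2 = ∑' j, (c n j) * (c n j) := by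
        rw [← real_inner_self_eq_norm_sq, lp.inner_eq_tsum]
        exact tsum_congr fun j => by
          simp [RCLike.inner_apply, starRingEnd_apply, star_trivial]; ring
      rw [h1, tsum_eq_sum (s := range n) (fun j hj => by
        rw [hcapp n j, if_neg (by simpa using hj), zero_mul])]
      exact Finset.sum_congr rfl fun j hj => by
        rw [hcapp n j, if_pos (mem_range.1 hj), sq]
    have hcinner : ∀ (n : ℕ) (h : H), ⟪c n, U h⟫ = ∑ i ∈ range n, ⟪f, F i⟫ * ⟪h, g i⟫ := by
      intro n h
      have h1 : ⟪c n, U h⟫ = ∑' j, (c n j) * (U h j) := by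
        rw [lp.inner_eq_tsum]
        exact tsum_congr fun j => by
          simp [RCLike.inner_apply, starRingEnd_apply, star_trivial]; ring
      rw [h1, tsum_eq_sum (s := range n) (fun j hj => by
        rw [hcapp n j, if_neg (by simpa using hj), zero_mul])]
      exact Finset.sum_congr rfl fun j hj => by
        rw [hcapp n j, if_pos (mem_range.1 hj), hU]
    set w : ℕ → H := fun n => ∑ i ∈ range n, (⟪f, F i⟫ : ℝ) • g i with hwdef
    have hwin : ∀ (n : ℕ) (h : H), ⟪w n, h⟫ = ∑ i ∈ range n, ⟪f, F i⟫ * ⟪h, g i⟫ := by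
      intro n h
      rw [hwdef]
      simp only [sum_inner, real_inner_smul_left]
      exact Finset.sum_congr rfl fun i _ => by rw [real_inner_comm (g i) h]
    have hwb : ∀ n, ‖w n‖ ≤ C * ‖f‖ := by
      intro n
      have h1 : ‖w n‖ ^ 2 = ⟪f, S n (w n)⟫ := by
        rw [← real_inner_self_eq_norm_sq, hwin n (w n), hSapp, inner_sum]
        exact Finset.sum_congr rfl fun i _ => by
          rw [real_inner_smul_right]; ring
      have h2 : ⟪f, S n (w n)⟫ ≤ ‖f‖ * (C * ‖w n‖) := by
        refine le_trans (real_inner_le_norm _ _) ?_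
        refine mul_le_mul_of_nonneg_left ?_ (norm_nonneg f)
        exact le_trans ((S n).le_opNorm _)
          (mul_le_mul_of_nonneg_right (hCS n) (norm_nonneg _))
      have h3 : ‖w n‖ ^ 2 ≤ ‖f‖ * (C * ‖w n‖) := h1 ▸ h2
      rcases eq_or_lt_of_le (norm_nonneg (w n)) with h0 | hpos
      · rw [← h0]; positivity
      · nlinarith [h3, hpos]
    have hdec : ∀ n, ∃ q ∈ Rᗮ, ‖c n - q‖ ≤ K := by
      intro n
      obtain ⟨p, hp, q, hq, hpq⟩ := R.exists_add_mem_mem_orthogonal (c n)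
      refine ⟨q, hq, ?_⟩
      have hcq : c n - q = p := by rw [hpq, add_sub_cancel_right]
      rw [hcq]
      obtain ⟨h, hh⟩ := hp
      have hh' : U h = p := hh
      have hqUh : ⟪U h, q⟫ = 0 :=
        hq (U h) (by rw [hRdef]; exact ⟨h, rfl⟩)
      have e1 : ‖U h‖ ^ 2 = ⟪c n, U h⟫ := by
        have hq0 : ⟪q, U h⟫ = 0 := by rw [real_inner_comm]; exact hqUh
        rw [← real_inner_self_eq_norm_sq, hpq, ← hh', inner_add_left, hq0, add_zero]
      have e2 : ‖U h‖ ^ 2 ≤ (C * ‖f‖) * ‖h‖ := by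
        rw [e1, hcinner n h, ← hwin n h]
        exact le_trans (real_inner_le_norm _ _)
          (mul_le_mul_of_nonneg_right (hwb n) (norm_nonneg h))
      have e3 : Real.sqrt A₀ * ‖h‖ ≤ ‖U h‖ := hUlow h
      rw [← hh', hKdef, le_div_iff₀ hs0]
      rcases eq_or_lt_of_le (norm_nonneg (U h)) with h0 | hpos
      · rw [← h0, zero_mul]; positivity
      · nlinarith [mul_le_mul_of_nonneg_left e3 (mul_nonneg hC0.le (norm_nonneg f)),
          mul_le_mul_of_nonneg_left e2 (Real.sqrt_nonneg A₀), hpos, hs0]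
    choose q hqmem hqK using hdec
    have hdivt : Tendsto (fun n => ∑ i ∈ range n, ⟪f, F i⟫ ^ 2) atTop atTop := by
      by_contra hcon
      exact hns ((summable_iff_not_tendsto_nat_atTop_of_nonneg
        (fun i => sq_nonneg _)).2 hcon)
    have hcdiv : Tendsto (fun n => ‖c n‖) atTop atTop := by
      rw [tendsto_atTop]
      intro b
      filter_upwards [hdivt.eventually_ge_atTop (max b 0 ^ 2)] with n hn
      have h2 : max b 0 ^ 2 ≤ ‖c n‖ ^ 2 := by rw [hcnorm n]; exact hn
      have hm0 : (0:ℝ) ≤ max b 0 := le_max_right _ _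
      have : max b 0 ≤ ‖c n‖ := by
        by_contra hlt
        push_neg at hlt
        have := mul_self_lt_mul_self (norm_nonneg (c n)) hlt
        nlinarith
      exact le_trans (le_max_left b 0) this
    have hqdiv : Tendsto (fun n => ‖q n‖) atTop atTop := by
      refine tendsto_atTop_mono (fun n => ?_)
        (tendsto_atTop_add_const_right atTop (-K) hcdiv)
      have h1 : ‖c n‖ - ‖q n‖ ≤ ‖c n - q n‖ := norm_sub_norm_le _ _
      have := hqK n
      linarith
    obtain ⟨N, hN⟩ := Filter.eventually_atTop.1 (hqdiv.eventually_ge_atTop 1)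
    haveI : ProperSpace ↥Rᗮ := FiniteDimensional.proper ℝ _
    set v : ℕ → ↥Rᗮ :=
      fun k => (‖q (k + N)‖⁻¹ : ℝ) • (⟨q (k + N), hqmem (k + N)⟩ : ↥Rᗮ) with hvdef
    have hvmem : ∀ k, v k ∈ Metric.sphere (0 : ↥Rᗮ) 1 := by
      intro k
      have h1 : (1:ℝ) ≤ ‖q (k + N)‖ := hN _ (Nat.le_add_left N k)
      have h2 : ‖q (k + N)‖ ≠ 0 := by linarith
      rw [mem_sphere_zero_iff_norm, hvdef]
      have h3 : ‖(⟨q (k + N), hqmem (k + N)⟩ : ↥Rᗮ)‖ = ‖q (k + N)‖ := rfl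
      rw [norm_smul, h3, norm_inv, Real.norm_eq_abs,
        abs_of_nonneg (norm_nonneg _), inv_mul_cancel₀ h2]
    obtain ⟨x, hxs, φ, hφmono, hφtendsto⟩ :=
      (isCompact_sphere (0 : ↥Rᗮ) 1).tendsto_subseq hvmem
    set m : ℕ → ℕ := fun k => φ k + N with hmdef
    have hmdiv : Tendsto m atTop atTop :=
      (tendsto_add_atTop_nat N).comp hφmono.tendsto_atTop
    have hqm : Tendsto (fun k => ‖q (m k)‖) atTop atTop := hqdiv.comp hmdiv
    have hy : Tendsto (fun k => (‖q (m k)‖⁻¹ : ℝ) • c (m k)) atTop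
        (nhds (x : lp (fun _ : ℕ => ℝ) 2)) := by
      have h1 : Tendsto (fun k => ((v (φ k) : lp (fun _ : ℕ => ℝ) 2))) atTop
          (nhds (x : lp (fun _ : ℕ => ℝ) 2)) :=
        ((continuous_subtype_val.tendsto x).comp hφtendsto)
      refine tendsto_of_tendsto_of_dist h1 ?_
      have hbound : ∀ k, dist ((v (φ k) : lp (fun _ : ℕ => ℝ) 2))
          ((‖q (m k)‖⁻¹ : ℝ) • c (m k)) ≤ ‖q (m k)‖⁻¹ * K := by
        intro k
        have hco : ((v (φ k) : lp (fun _ : ℕ => ℝ) 2)) = (‖q (m k)‖⁻¹ : ℝ) • q (m k) := rfl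
        rw [hco, dist_eq_norm, ← smul_sub, norm_smul, norm_inv,
          Real.norm_eq_abs, abs_of_nonneg (norm_nonneg _)]
        refine mul_le_mul_of_nonneg_left ?_ (by positivity)
        rw [← neg_sub, norm_neg]
        exact hqK (m k)
      refine squeeze_zero (fun k => dist_nonneg) hbound ?_
      have h2 : Tendsto (fun k => ‖q (m k)‖⁻¹) atTop (nhds 0) := by
        exact hqm.inv_tendsto_atTop
      simpa using h2.mul_const K
    have hxcoord : ∀ j : ℕ, (x : lp (fun _ : ℕ => ℝ) 2) j = 0 := by
      intro j
      have hcoord : Tendsto (fun k => ((‖q (m k)‖⁻¹ : ℝ) • c (m k)) j) atTop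
          (nhds ((x : lp (fun _ : ℕ => ℝ) 2) j)) := by
        rw [tendsto_iff_dist_tendsto_zero]
        refine squeeze_zero (fun k => dist_nonneg) (fun k => ?_)
          (tendsto_iff_dist_tendsto_zero.1 hy)
        have := lp.norm_apply_le_norm (p := 2) (by norm_num)
          ((‖q (m k)‖⁻¹ : ℝ) • c (m k) - (x : lp (fun _ : ℕ => ℝ) 2)) j
        rw [dist_eq_norm, dist_eq_norm]
        refine le_trans (le_of_eq ?_) this
        rw [lp.coeFn_sub]
        rfl
      have hcoord2 : Tendsto (fun k => ((‖q (m k)‖⁻¹ : ℝ) • c (m k)) j) atTop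
          (nhds 0) := by
        have hev : (fun k => ((‖q (m k)‖⁻¹ : ℝ) • c (m k)) j) =ᶠ[atTop]
            (fun k => ‖q (m k)‖⁻¹ * ⟪f, F j⟫) := by
          filter_upwards [hmdiv.eventually_gt_atTop j] with k hk
          rw [lp.coeFn_smul, Pi.smul_apply, hcapp _ j, if_pos hk, smul_eq_mul]
        refine Tendsto.congr' hev.symm ?_
        simpa using hqm.inv_tendsto_atTop.mul_const (⟪f, F j⟫ : ℝ)
      exact tendsto_nhds_unique hcoord hcoord2
    have hx0 : (x : lp (fun _ : ℕ => ℝ) 2) = 0 := lp.ext (funext hxcoord)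
    have hx1 : ‖x‖ = 1 := mem_sphere_zero_iff_norm.1 hxs
    rw [show ‖x‖ = ‖(x : lp (fun _ : ℕ => ℝ) 2)‖ from rfl, hx0, norm_zero] at hx1
    exact one_ne_zero hx1.symm
  -- Bessel bound
  obtain ⟨B₁, hB₁, hBes⟩ : ∃ B₁, 0 < B₁ ∧ ∀ f : H, ∑' i, ⟪f, F i⟫ ^ 2 ≤ B₁ * ‖f‖ ^ 2 := by
    set ι := {p : ℕ × (ℕ → ℝ) // ∑ i ∈ range p.1, p.2 i ^ 2 ≤ 1} with hι
    set φ : ι → H →L[ℝ] ℝ := fun x => innerSL ℝ (∑ i ∈ range x.1.1, x.1.2 i • F i) with hφ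
    have hφapp : ∀ (x : ι) (f : H), φ x f = ∑ i ∈ range x.1.1, x.1.2 i * ⟪f, F i⟫ := by
      intro x f
      simp [hφ, sum_inner, real_inner_smul_left, real_inner_comm]
    have hpt : ∀ f : H, ∃ C, ∀ x : ι, ‖φ x f‖ ≤ C := by
      intro f
      refine ⟨Real.sqrt (∑' i, ⟪f, F i⟫ ^ 2), fun x => ?_⟩
      rw [hφapp, Real.norm_eq_abs, ← Real.sqrt_sq_eq_abs]
      refine Real.sqrt_le_sqrt ?_
      calc (∑ i ∈ range x.1.1, x.1.2 i * ⟪f, F i⟫) ^ 2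
          ≤ (∑ i ∈ range x.1.1, x.1.2 i ^ 2) * ∑ i ∈ range x.1.1, ⟪f, F i⟫ ^ 2 :=
            Finset.sum_mul_sq_le_sq_mul_sq _ _ _
        _ ≤ 1 * ∑' i, ⟪f, F i⟫ ^ 2 := by
            refine mul_le_mul x.2 (Summable.sum_le_tsum _ (fun i _ => sq_nonneg _) (hsum f))
              (Finset.sum_nonneg fun i _ => sq_nonneg _) zero_le_one
        _ = ∑' i, ⟪f, F i⟫ ^ 2 := one_mul _
    obtain ⟨C₁, hC₁⟩ := banach_steinhaus hpt
    have hC₁0 : 0 ≤ C₁ := le_trans (norm_nonneg (φ ⟨(0, fun _ => 0), by simp⟩)) (hC₁ _)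
    have hfin : ∀ (n : ℕ) (f : H), ∑ i ∈ range n, ⟪f, F i⟫ ^ 2 ≤ (C₁ ^ 2 + 1) * ‖f‖ ^ 2 := by
      intro n f
      set t := ∑ i ∈ range n, ⟪f, F i⟫ ^ 2 with ht
      have htnn : 0 ≤ t := Finset.sum_nonneg fun i _ => sq_nonneg _
      rcases eq_or_lt_of_le htnn with h0 | hpos
      · rw [← h0]; positivity
      · set a : ℕ → ℝ := fun i => ⟪f, F i⟫ / Real.sqrt t with ha
        have hst : Real.sqrt t ^ 2 = t := Real.sq_sqrt htnn
        have hst0 : 0 < Real.sqrt t := Real.sqrt_pos.2 hpos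
        have hsum1 : ∑ i ∈ range n, a i ^ 2 ≤ 1 := by
          simp only [ha, div_pow]
          rw [← Finset.sum_div, hst, ← ht, div_self (ne_of_gt hpos)]
        have happ : φ ⟨(n, a), hsum1⟩ f = Real.sqrt t := by
          rw [hφapp]
          simp only [ha, div_mul_eq_mul_div]
          rw [← Finset.sum_div]
          have : ∑ i ∈ range n, ⟪f, F i⟫ * ⟪f, F i⟫ = t := by
            rw [ht]; exact Finset.sum_congr rfl fun i _ => (sq ⟪f, F i⟫).symm
          rw [this, Real.div_sqrt]
        have hb : Real.sqrt t ≤ C₁ * ‖f‖ := by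
          have h1 : ‖φ ⟨(n, a), hsum1⟩ f‖ ≤ ‖φ ⟨(n, a), hsum1⟩‖ * ‖f‖ :=
            (φ _).le_opNorm f
          have h2 : ‖φ ⟨(n, a), hsum1⟩‖ * ‖f‖ ≤ C₁ * ‖f‖ :=
            mul_le_mul_of_nonneg_right (hC₁ _) (norm_nonneg f)
          calc Real.sqrt t ≤ ‖φ ⟨(n, a), hsum1⟩ f‖ := by
                rw [happ, Real.norm_eq_abs]; exact le_abs_self _
            _ ≤ C₁ * ‖f‖ := h1.trans h2
        nlinarith [norm_nonneg f, sq_nonneg ‖f‖]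
    refine ⟨C₁ ^ 2 + 1, by positivity, fun f => ?_⟩
    exact Summable.tsum_le_of_sum_range_le (hsum f) fun n => hfin n f
  -- lower bound
  refine ⟨B₀⁻¹, B₁, by positivity, hB₁, fun f => ⟨hsum f, ?_, hBes f⟩⟩
  by_cases hf0 : f = 0
  · simp [hf0]
  · have hfpos : 0 < ‖f‖ := norm_pos_iff.2 hf0
    set T := ∑' i, ⟪f, F i⟫ ^ 2 with hT
    have hTnn : 0 ≤ T := tsum_nonneg fun i => sq_nonneg _
    have key : ‖f‖ ^ 2 ≤ (Real.sqrt B₀ * ‖f‖) * Real.sqrt T := by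
      have hlim : Tendsto (fun n => ⟪f, ∑ i ∈ range n, ⟪f, g i⟫ • F i⟫) atTop
          (nhds (‖f‖ ^ 2)) := by
        have := Filter.Tendsto.inner (𝕜 := ℝ) (tendsto_const_nhds (x := f)) (hF f)
        rwa [real_inner_self_eq_norm_sq] at this
      refine le_of_tendsto hlim (Filter.Eventually.of_forall fun n => ?_)
      have heq : ⟪f, ∑ i ∈ range n, ⟪f, g i⟫ • F i⟫
          = ∑ i ∈ range n, ⟪f, g i⟫ * ⟪f, F i⟫ := by
        simp [inner_sum, real_inner_smul_right]
      rw [heq]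
      have hcs : (∑ i ∈ range n, ⟪f, g i⟫ * ⟪f, F i⟫) ^ 2
          ≤ (∑ i ∈ range n, ⟪f, g i⟫ ^ 2) * ∑ i ∈ range n, ⟪f, F i⟫ ^ 2 :=
        Finset.sum_mul_sq_le_sq_mul_sq _ _ _
      have h1 : ∑ i ∈ range n, ⟪f, g i⟫ ^ 2 ≤ B₀ * ‖f‖ ^ 2 :=
        le_trans (Summable.sum_le_tsum _ (fun i _ => sq_nonneg _) (hg f).1) (hg f).2.2
      have h2 : ∑ i ∈ range n, ⟪f, F i⟫ ^ 2 ≤ T :=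
        Summable.sum_le_tsum _ (fun i _ => sq_nonneg _) (hsum f)
      calc ∑ i ∈ range n, ⟪f, g i⟫ * ⟪f, F i⟫
          ≤ |∑ i ∈ range n, ⟪f, g i⟫ * ⟪f, F i⟫| := le_abs_self _
        _ = Real.sqrt ((∑ i ∈ range n, ⟪f, g i⟫ * ⟪f, F i⟫) ^ 2) :=
            (Real.sqrt_sq_eq_abs _).symm
        _ ≤ Real.sqrt ((B₀ * ‖f‖ ^ 2) * T) := by
            refine Real.sqrt_le_sqrt (hcs.trans ?_)
            refine mul_le_mul h1 h2 (Finset.sum_nonneg fun i _ => sq_nonneg _) ?_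
            positivity
        _ = (Real.sqrt B₀ * ‖f‖) * Real.sqrt T := by
            rw [Real.sqrt_mul (by positivity), Real.sqrt_mul hB₀.le,
              Real.sqrt_sq (norm_nonneg f)]
    have hsB : Real.sqrt B₀ ^ 2 = B₀ := Real.sq_sqrt hB₀.le
    have hsT : Real.sqrt T ^ 2 = T := Real.sq_sqrt hTnn
    rw [inv_mul_le_iff₀ hB₀]
    have hu : (Real.sqrt B₀ * Real.sqrt T) ^ 2 = B₀ * T := by rw [mul_pow, hsB, hsT]
    nlinarith [key, hfpos, hu, sq_nonneg (Real.sqrt B₀ * Real.sqrt T - ‖f‖)]
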